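/- arXiv:2112.09592 — 17 statements merged into one kernel-verified Lean document; each statement's English description precedes it below -/
import Mathlib

section
/- In ℤ³ equipped with the symmetric bilinear form B(u,w) = u₁w₃ + u₃w₁ + 6u₂w₂, the orthogonal complement of the vector v = (−1,−1,4) equals the ℤ-span of w₁ = (1,1,−2) and w₂ = (0,1,−6), and the Gram matrix of (w₁,w₂) is [[2,0],[0,6]]. (This computes the transcendental lattice of the singular K3 surface X₋₃₆ of Verrill's family: T(X₋₃₆) = [2 0 6].) -/
theorem stmt_0 :
    let B : (Fin 3 → ℤ) → (Fin 3 → ℤ) → ℤ :=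
      fun u w => u 0 * w 2 + u 2 * w 0 + 6 * (u 1 * w 1)
    let v : Fin 3 → ℤ := ![-1, -1, 4]
    let w₁ : Fin 3 → ℤ := ![1, 1, -2]
    let w₂ : Fin 3 → ℤ := ![0, 1, -6]
    {w : Fin 3 → ℤ | B v w = 0} = (Submodule.span ℤ {w₁, w₂} : Set (Fin 3 → ℤ)) ∧
      B w₁ w₁ = 2 ∧ B w₁ w₂ = 0 ∧ B w₂ w₁ = 0 ∧ B w₂ w₂ = 6 := by
  intro B v w₁ w₂
  refine ⟨?_, by norm_num [B, w₁, w₂]; rfl, by norm_num [B, w₁, w₂]; rfl,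
    by norm_num [B, w₁, w₂]; rfl, by norm_num [B, w₁, w₂]⟩
  ext w
  simp only [Set.mem_setOf_eq, SetLike.mem_coe, Submodule.mem_span_pair, B, v]
  constructor
  · intro h
    simp at h
    refine ⟨w 0, w 1 - w 0, ?_⟩
    funext i
    fin_cases i <;> simp [w₁, w₂] <;> omega
  · rintro ⟨a, b, rfl⟩
    simp [w₁, w₂]
    ring
end

section
/- In ℤ³ equipped with the symmetric bilinear form B(u,w) = u₁w₃ + u₃w₁ + 6u₂w₂, the orthogonal complement of the vector v = (−2,0,1) equals the ℤ-span of w₁ = (2,0,1) and w₂ = (0,1,0), and the Gram matrix of (w₁,w₂) is [[4,0],[0,6]]. (This computes the transcendental lattice of the singular K3 surface X₋₁₂ of Verrill's family: T(X₋₁₂) = [4 0 6].) -/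
theorem stmt_1 :
    let B : (Fin 3 → ℤ) → (Fin 3 → ℤ) → ℤ :=
      fun u w => u 0 * w 2 + u 2 * w 0 + 6 * (u 1 * w 1)
    let v : Fin 3 → ℤ := ![-2, 0, 1]
    let w₁ : Fin 3 → ℤ := ![2, 0, 1]
    let w₂ : Fin 3 → ℤ := ![0, 1, 0]
    {w : Fin 3 → ℤ | B v w = 0} = (Submodule.span ℤ {w₁, w₂} : Set (Fin 3 → ℤ)) ∧
      B w₁ w₁ = 4 ∧ B w₁ w₂ = 0 ∧ B w₂ w₁ = 0 ∧ B w₂ w₂ = 6 := by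
  intro B v w₁ w₂
  refine ⟨?_, by norm_num [B, w₁, w₂, Matrix.cons_val_two], by norm_num [B, w₁, w₂, Matrix.cons_val_two],
    by norm_num [B, w₁, w₂, Matrix.cons_val_two], by norm_num [B, w₁, w₂, Matrix.cons_val_two]⟩
  ext w
  simp only [Set.mem_setOf_eq, SetLike.mem_coe, Submodule.mem_span_pair, B, v]
  constructor
  · intro h
    refine ⟨w 2, w 1, ?_⟩
    funext i
    fin_cases i <;> simp [w₁, w₂] <;> norm_num [Matrix.cons_val_two] at h ⊢ <;> linarith
  · rintro ⟨a, b, rfl⟩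
    simp [w₁, w₂]
    ring
end

section
/- In ℤ³ equipped with the symmetric bilinear form B(u,w) = u₁w₃ + u₃w₁ + 6u₂w₂, the orthogonal complement of the vector v = (−4,0,1) equals the ℤ-span of w₁ = (0,1,0) and w₂ = (4,0,1), and the Gram matrix of (w₁,w₂) is [[6,0],[0,8]]. (This computes the transcendental lattice of the singular K3 surface X₋₆ of Verrill's family: T(X₋₆) = [6 0 8].) -/
theorem stmt_2 :
    let B : (Fin 3 → ℤ) → (Fin 3 → ℤ) → ℤ :=
      fun u w => u 0 * w 2 + u 2 * w 0 + 6 * (u 1 * w 1)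
    let v : Fin 3 → ℤ := ![-4, 0, 1]
    let w₁ : Fin 3 → ℤ := ![0, 1, 0]
    let w₂ : Fin 3 → ℤ := ![4, 0, 1]
    {w : Fin 3 → ℤ | B v w = 0} = (Submodule.span ℤ {w₁, w₂} : Set (Fin 3 → ℤ)) ∧
      B w₁ w₁ = 6 ∧ B w₁ w₂ = 0 ∧ B w₂ w₁ = 0 ∧ B w₂ w₂ = 8 := by
  intro B v w₁ w₂
  refine ⟨?_, by norm_num [B, w₁, w₂], by norm_num [B, w₁, w₂, Matrix.cons_val_two, Matrix.tail_cons, Matrix.head_cons],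
    by norm_num [B, w₁, w₂, Matrix.cons_val_two, Matrix.tail_cons, Matrix.head_cons], by norm_num [B, w₁, w₂, Matrix.cons_val_two, Matrix.tail_cons, Matrix.head_cons]⟩
  ext w
  simp only [Set.mem_setOf_eq, SetLike.mem_coe]
  constructor
  · intro hw
    have hw' : w 0 = 4 * w 2 := by
      simp only [B, v] at hw
      simp [Matrix.cons_val_zero, Matrix.cons_val_one] at hw
      linarith
    have : w = w 1 • w₁ + w 2 • w₂ := by
      funext i
      fin_cases i <;> simp [w₁, w₂, hw'] <;> ring
    rw [this]
    exact Submodule.add_mem _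
      (Submodule.smul_mem _ _ (Submodule.subset_span (Set.mem_insert _ _)))
      (Submodule.smul_mem _ _ (Submodule.subset_span (Set.mem_insert_of_mem _ rfl)))
  · intro hw
    induction hw using Submodule.span_induction with
    | mem x hx =>
      rcases hx with h | h <;> subst h <;> simp [B, v, w₁, w₂]
    | zero => simp [B, v]
    | add x y _ _ hx hy =>
      simp [B, v] at hx hy ⊢
      linarith
    | smul a x _ hx =>
      simp [B, v] at hx ⊢
      linear_combination a * hx
end

section
/- In ℤ³ equipped with the symmetric bilinear form B(u,w) = u₁w₃ + u₃w₁ + 6u₂w₂, the orthogonal complement of the vector v = (−8,−1,1) equals the ℤ-span of w₁ = (6,1,0) and w₂ = (2,−1,1), and the Gram matrix of (w₁,w₂) is [[6,0],[0,10]]. (This computes the transcendental lattice of the singular K3 surface X₋₃ of Verrill's family: T(X₋₃) = [6 0 10].) -/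
theorem stmt_3 :
    let B : (Fin 3 → ℤ) → (Fin 3 → ℤ) → ℤ :=
      fun u w => u 0 * w 2 + u 2 * w 0 + 6 * (u 1 * w 1)
    let v : Fin 3 → ℤ := ![-8, -1, 1]
    let w₁ : Fin 3 → ℤ := ![6, 1, 0]
    let w₂ : Fin 3 → ℤ := ![2, -1, 1]
    {w : Fin 3 → ℤ | B v w = 0} = (Submodule.span ℤ {w₁, w₂} : Set (Fin 3 → ℤ)) ∧
      B w₁ w₁ = 6 ∧ B w₁ w₂ = 0 ∧ B w₂ w₁ = 0 ∧ B w₂ w₂ = 10 := by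
  intro B v w₁ w₂
  refine ⟨?_, by norm_num [B, w₁, w₂, Matrix.cons_val_two, Matrix.tail_cons, Matrix.head_cons], by norm_num [B, w₁, w₂, Matrix.cons_val_two, Matrix.tail_cons, Matrix.head_cons],
    by norm_num [B, w₁, w₂, Matrix.cons_val_two, Matrix.tail_cons, Matrix.head_cons], by norm_num [B, w₁, w₂, Matrix.cons_val_two, Matrix.tail_cons, Matrix.head_cons]⟩
  ext w
  simp only [Set.mem_setOf_eq, SetLike.mem_coe, Submodule.mem_span_pair]
  constructor
  · intro h
    refine ⟨w 1 + w 2, w 2, ?_⟩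
    have h' : w 0 = 6 * w 1 + 8 * w 2 := by
      simp only [B, v, Matrix.cons_val_zero, Matrix.cons_val_one, Matrix.head_cons,
        Matrix.cons_val_two, Matrix.tail_cons] at h
      linarith
    funext i
    fin_cases i <;>
      simp [w₁, w₂, h'] <;> ring
  · rintro ⟨a, b, rfl⟩
    simp only [B, v, w₁, w₂, Pi.add_apply, Pi.smul_apply, smul_eq_mul,
      Matrix.cons_val_zero, Matrix.cons_val_one, Matrix.head_cons,
      Matrix.cons_val_two, Matrix.tail_cons]
    ring
end

section
/- In ℤ³ equipped with the symmetric bilinear form B(u,w) = u₁w₃ + u₃w₁ + 6u₂w₂, the orthogonal complement of the vector v = (−4,−1,1) equals the ℤ-span of w₁ = (−2,−1,1) and w₂ = (6,1,0), and the Gram matrix of (w₁,w₂) is [[2,0],[0,6]]. (This computes the transcendental lattice of the singular K3 surface X₀ of Verrill's family: T(X₀) = [2 0 6].) -/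
theorem stmt_4 :
    let B : (Fin 3 → ℤ) → (Fin 3 → ℤ) → ℤ :=
      fun u w => u 0 * w 2 + u 2 * w 0 + 6 * (u 1 * w 1)
    let v : Fin 3 → ℤ := ![-4, -1, 1]
    let w₁ : Fin 3 → ℤ := ![-2, -1, 1]
    let w₂ : Fin 3 → ℤ := ![6, 1, 0]
    {w : Fin 3 → ℤ | B v w = 0} = (Submodule.span ℤ {w₁, w₂} : Set (Fin 3 → ℤ)) ∧
      B w₁ w₁ = 2 ∧ B w₁ w₂ = 0 ∧ B w₂ w₁ = 0 ∧ B w₂ w₂ = 6 := by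
  intro B v w₁ w₂
  refine ⟨?_, by norm_num [B, w₁, w₂, Matrix.cons_val_two, Matrix.tail_cons, Matrix.head_cons], by norm_num [B, w₁, w₂, Matrix.cons_val_two, Matrix.tail_cons, Matrix.head_cons],
    by norm_num [B, w₁, w₂, Matrix.cons_val_two, Matrix.tail_cons, Matrix.head_cons], by norm_num [B, w₁, w₂, Matrix.cons_val_two, Matrix.tail_cons, Matrix.head_cons]⟩
  ext w
  simp only [Set.mem_setOf_eq, SetLike.mem_coe]
  constructor
  · intro h
    have hmem : w = (w 2) • w₁ + (w 1 + w 2) • w₂ := by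
      funext i
      fin_cases i <;>
        simp only [B, v, Matrix.cons_val_zero, Matrix.cons_val_one, Matrix.head_cons,
          Matrix.cons_val_two, Matrix.tail_cons] at h ⊢ <;>
        simp [w₁, w₂] <;> linarith
    rw [hmem]
    exact Submodule.add_mem _
      (Submodule.smul_mem _ _ (Submodule.subset_span (by simp)))
      (Submodule.smul_mem _ _ (Submodule.subset_span (by simp)))
  · intro h
    induction h using Submodule.span_induction with
    | mem x hx =>
      rcases hx with h | h <;> subst h <;> norm_num [B, v, w₁, w₂, Matrix.cons_val_two, Matrix.tail_cons, Matrix.head_cons]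
    | zero => simp [B]
    | add x y _ _ hx hy =>
      simp only [B, Pi.add_apply] at hx hy ⊢; linear_combination hx + hy
    | smul a x _ hx =>
      simp only [B, Pi.smul_apply, smul_eq_mul] at hx ⊢; linear_combination a * hx
end

section
/- In ℤ³ equipped with the symmetric bilinear form B(u,w) = u₁w₃ + u₃w₁ + 6u₂w₂, the orthogonal complement of the vector v = (−6,2,3) equals the ℤ-span of w₁ = (−2,1,1) and w₂ = (2,0,1), and the Gram matrix of (w₁,w₂) is [[2,0],[0,4]]. (This computes the transcendental lattice of the singular K3 surface X₄ of Verrill's family: T(X₄) = [2 0 4].) -/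
theorem stmt_5 :
    let B : (Fin 3 → ℤ) → (Fin 3 → ℤ) → ℤ :=
      fun u w => u 0 * w 2 + u 2 * w 0 + 6 * (u 1 * w 1)
    let v : Fin 3 → ℤ := ![-6, 2, 3]
    let w₁ : Fin 3 → ℤ := ![-2, 1, 1]
    let w₂ : Fin 3 → ℤ := ![2, 0, 1]
    {w : Fin 3 → ℤ | B v w = 0} = (Submodule.span ℤ {w₁, w₂} : Set (Fin 3 → ℤ)) ∧
      B w₁ w₁ = 2 ∧ B w₁ w₂ = 0 ∧ B w₂ w₁ = 0 ∧ B w₂ w₂ = 4 := by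
  intro B v w₁ w₂
  refine ⟨?_, by norm_num [B, w₁, w₂, Matrix.cons_val_two], by norm_num [B, w₁, w₂, Matrix.cons_val_two],
    by norm_num [B, w₁, w₂, Matrix.cons_val_two], by norm_num [B, w₁, w₂, Matrix.cons_val_two]⟩
  ext w
  simp only [Set.mem_setOf_eq, SetLike.mem_coe]
  constructor
  · intro hw
    have hw' : w 0 = 2 * w 2 - 4 * w 1 := by
      simp [B, v, Matrix.cons_val_zero, Matrix.cons_val_one] at hw
      linarith
    have : w = (w 1) • w₁ + (w 2 - w 1) • w₂ := by
      funext i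
      fin_cases i <;>
        simp [w₁, w₂, hw'] <;> ring
    rw [this]
    exact Submodule.add_mem _
      (Submodule.smul_mem _ _ (Submodule.subset_span (Set.mem_insert _ _)))
      (Submodule.smul_mem _ _ (Submodule.subset_span (Set.mem_insert_of_mem _ rfl)))
  · intro hw
    induction hw using Submodule.span_induction with
    | mem x hx =>
      rcases hx with h | h <;> subst h <;> norm_num [B, v, w₁, w₂, Matrix.cons_val_two]
    | zero => simp [B]
    | add x y _ _ hx hy => simp [B] at hx hy ⊢; linarith
    | smul a x _ hx => simp [B] at hx ⊢; linear_combination a * hx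
end

section
/- In ℤ³ equipped with the symmetric bilinear form B(u,w) = u₁w₃ + u₃w₁ + 6u₂w₂, the orthogonal complement of the vector v = (−2,−1,2) equals the ℤ-span of w₁ = (1,0,1) and w₂ = (2,1,−1), and the Gram matrix of (w₁,w₂) is [[2,1],[1,2]]. (This computes the transcendental lattice of the singular K3 surface X₁₂ of Verrill's family: T(X₁₂) = [2 1 2].) -/
theorem stmt_6 :
    let B : (Fin 3 → ℤ) → (Fin 3 → ℤ) → ℤ :=
      fun u w => u 0 * w 2 + u 2 * w 0 + 6 * (u 1 * w 1)
    let v : Fin 3 → ℤ := ![-2, -1, 2]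
    let w₁ : Fin 3 → ℤ := ![1, 0, 1]
    let w₂ : Fin 3 → ℤ := ![2, 1, -1]
    {w : Fin 3 → ℤ | B v w = 0} = (Submodule.span ℤ {w₁, w₂} : Set (Fin 3 → ℤ)) ∧
      B w₁ w₁ = 2 ∧ B w₁ w₂ = 1 ∧ B w₂ w₁ = 1 ∧ B w₂ w₂ = 2 := by
  intro B v w₁ w₂
  refine ⟨?_, by norm_num [B, w₁, w₂, Matrix.cons_val_two, Matrix.vecHead, Matrix.vecTail], by norm_num [B, w₁, w₂, Matrix.cons_val_two, Matrix.vecHead, Matrix.vecTail],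
    by norm_num [B, w₁, w₂, Matrix.cons_val_two, Matrix.vecHead, Matrix.vecTail], by norm_num [B, w₁, w₂, Matrix.cons_val_two, Matrix.vecHead, Matrix.vecTail]⟩
  ext w
  simp only [Set.mem_setOf_eq, SetLike.mem_coe]
  constructor
  · intro h
    have hw : w = (w 2 + w 1) • w₁ + (w 1) • w₂ := by
      have h0 : w 0 = w 2 + 3 * w 1 := by
        simp only [B, v] at h
        simp [Matrix.cons_val_zero, Matrix.cons_val_one] at h
        linarith
      funext i
      fin_cases i <;>
        simp [w₁, w₂, h0, Pi.add_apply, Pi.smul_apply, smul_eq_mul] <;> ring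
    rw [hw]
    exact Submodule.add_mem _
      (Submodule.smul_mem _ _ (Submodule.subset_span (by simp)))
      (Submodule.smul_mem _ _ (Submodule.subset_span (by simp)))
  · intro h
    induction h using Submodule.span_induction with
    | mem x hx =>
      rcases hx with rfl | rfl <;> simp [B, v, w₁, w₂]
    | zero => simp [B]
    | add x y _ _ hx hy => simp only [B, Pi.add_apply] at *; linarith
    | smul a x _ hx => simp only [B, Pi.smul_apply, smul_eq_mul] at *; linear_combination a * hx
end

section
/- In ℤ³ equipped with the symmetric bilinear form B(u,w) = u₁w₃ + u₃w₁ + 6u₂w₂, the orthogonal complement of the vector v = (−2,−1,4) equals the ℤ-span of w₁ = (1,0,2) and w₂ = (1,1,−1), and the Gram matrix of (w₁,w₂) is [[4,1],[1,4]]. (This computes the transcendental lattice of the singular K3 surface X₆₀ of Verrill's family: T(X₆₀) = [4 1 4].) -/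
theorem stmt_7 :
    let B : (Fin 3 → ℤ) → (Fin 3 → ℤ) → ℤ :=
      fun u w => u 0 * w 2 + u 2 * w 0 + 6 * (u 1 * w 1)
    let v : Fin 3 → ℤ := ![-2, -1, 4]
    let w₁ : Fin 3 → ℤ := ![1, 0, 2]
    let w₂ : Fin 3 → ℤ := ![1, 1, -1]
    {w : Fin 3 → ℤ | B v w = 0} = (Submodule.span ℤ {w₁, w₂} : Set (Fin 3 → ℤ)) ∧
      B w₁ w₁ = 4 ∧ B w₁ w₂ = 1 ∧ B w₂ w₁ = 1 ∧ B w₂ w₂ = 4 := by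
  intro B v w₁ w₂
  refine ⟨?_, by decide, by decide, by decide, by decide⟩
  ext w
  simp only [Set.mem_setOf_eq, SetLike.mem_coe, Submodule.mem_span_pair]
  constructor
  · intro h
    refine ⟨w 0 - w 1, w 1, ?_⟩
    funext i
    fin_cases i <;>
      simp [w₁, w₂, Matrix.cons_val_zero, Matrix.cons_val_one] <;>
      · simp only [B, v] at h
        simp at h
        omega
  · rintro ⟨a, b, rfl⟩
    simp [B, v, w₁, w₂]
    ring
end

section
/- In ℤ³ equipped with the symmetric bilinear form B(u,w) = u₁w₃ + u₃w₁ + 12u₂w₂, the orthogonal complement of the vector v = (−6,1,6) equals the ℤ-span of w₁ = (1,0,1) and w₂ = (−1,1,1), and the Gram matrix of (w₁,w₂) is [[2,0],[0,10]]. (This computes the transcendental lattice of the singular K3 surface Y_{2√5} of the Apéry–Fermi family: T(Y_{2√5}) = [2 0 10].) -/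
theorem stmt_8 :
    let B : (Fin 3 → ℤ) → (Fin 3 → ℤ) → ℤ :=
      fun u w => u 0 * w 2 + u 2 * w 0 + 12 * (u 1 * w 1)
    let v : Fin 3 → ℤ := ![-6, 1, 6]
    let w₁ : Fin 3 → ℤ := ![1, 0, 1]
    let w₂ : Fin 3 → ℤ := ![-1, 1, 1]
    {w : Fin 3 → ℤ | B v w = 0} = (Submodule.span ℤ {w₁, w₂} : Set (Fin 3 → ℤ)) ∧
      B w₁ w₁ = 2 ∧ B w₁ w₂ = 0 ∧ B w₂ w₁ = 0 ∧ B w₂ w₂ = 10 := by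
  intro B v w₁ w₂
  refine ⟨?_, by norm_num [B, w₁, w₂, Matrix.cons_val_two], by norm_num [B, w₁, w₂, Matrix.cons_val_two],
    by norm_num [B, w₁, w₂, Matrix.cons_val_two], by norm_num [B, w₁, w₂, Matrix.cons_val_two]⟩
  ext w
  simp only [Set.mem_setOf_eq, SetLike.mem_coe, Submodule.mem_span_pair]
  constructor
  · intro h
    refine ⟨w 0 + w 1, w 1, ?_⟩
    funext i
    fin_cases i <;>
      simp [B, v, w₁, w₂, Matrix.cons_val_zero, Matrix.cons_val_one] at h ⊢ <;> linarith
  · rintro ⟨a, b, rfl⟩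
    simp [B, v, w₁, w₂]
    ring
end

section
/- In ℤ³ equipped with the symmetric bilinear form B(u,w) = u₁w₃ + u₃w₁ + 12u₂w₂, the orthogonal complement of the vector v = (−1,0,2) equals the ℤ-span of w₁ = (1,0,2) and w₂ = (0,1,0), and the Gram matrix of (w₁,w₂) is [[4,0],[0,12]]. (This computes the transcendental lattice of the singular K3 surface Y_{3√6} of the Apéry–Fermi family: T(Y_{3√6}) = [4 0 12].) -/
theorem stmt_9 :
    let B : (Fin 3 → ℤ) → (Fin 3 → ℤ) → ℤ :=
      fun u w => u 0 * w 2 + u 2 * w 0 + 12 * (u 1 * w 1)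
    let v : Fin 3 → ℤ := ![-1, 0, 2]
    let w₁ : Fin 3 → ℤ := ![1, 0, 2]
    let w₂ : Fin 3 → ℤ := ![0, 1, 0]
    {w : Fin 3 → ℤ | B v w = 0} = (Submodule.span ℤ {w₁, w₂} : Set (Fin 3 → ℤ)) ∧
      B w₁ w₁ = 4 ∧ B w₁ w₂ = 0 ∧ B w₂ w₁ = 0 ∧ B w₂ w₂ = 12 := by
  refine ⟨?_, by rfl, by rfl, by rfl, by norm_num⟩
  ext w
  simp only [Set.mem_setOf_eq, SetLike.mem_coe, Submodule.mem_span_pair]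
  constructor
  · intro h
    refine ⟨w 0, w 1, ?_⟩
    funext i
    fin_cases i <;> simp_all <;> omega
  · rintro ⟨a, b, rfl⟩
    simp
    ring
end

section
/- In ℤ³ equipped with the symmetric bilinear form B(u,w) = u₁w₃ + u₃w₁ + 12u₂w₂, the orthogonal complement of the vector v = (−2,1,6) equals the ℤ-span of w₁ = (1,0,3) and w₂ = (−1,1,3), and the Gram matrix of (w₁,w₂) is [[6,0],[0,6]]. (This computes the transcendental lattice of the singular K3 surface Y_{2√−3} of the Apéry–Fermi family: T(Y_{2√−3}) = [6 0 6].) -/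
theorem stmt_10 :
    let B : (Fin 3 → ℤ) → (Fin 3 → ℤ) → ℤ :=
      fun u w => u 0 * w 2 + u 2 * w 0 + 12 * (u 1 * w 1)
    let v : Fin 3 → ℤ := ![-2, 1, 6]
    let w₁ : Fin 3 → ℤ := ![1, 0, 3]
    let w₂ : Fin 3 → ℤ := ![-1, 1, 3]
    {w : Fin 3 → ℤ | B v w = 0} = (Submodule.span ℤ {w₁, w₂} : Set (Fin 3 → ℤ)) ∧
      B w₁ w₁ = 6 ∧ B w₁ w₂ = 0 ∧ B w₂ w₁ = 0 ∧ B w₂ w₂ = 6 := by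
  intro B v w₁ w₂
  refine ⟨?_, by norm_num [B, w₁, w₂, Matrix.cons_val_two, Matrix.tail_cons, Matrix.head_cons], by norm_num [B, w₁, w₂, Matrix.cons_val_two, Matrix.tail_cons, Matrix.head_cons],
    by norm_num [B, w₁, w₂, Matrix.cons_val_two, Matrix.tail_cons, Matrix.head_cons], by norm_num [B, w₁, w₂, Matrix.cons_val_two, Matrix.tail_cons, Matrix.head_cons]⟩
  ext w
  simp only [Set.mem_setOf_eq, SetLike.mem_coe, Submodule.mem_span_pair]
  constructor
  · intro h
    simp only [B, v, Matrix.cons_val_zero, Matrix.cons_val_one, Matrix.head_cons,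
      Matrix.cons_val_two, Matrix.tail_cons] at h
    refine ⟨w 0 + w 1, w 1, ?_⟩
    funext i
    fin_cases i <;>
      simp [w₁, w₂, Matrix.cons_val_zero, Matrix.cons_val_one, Matrix.head_cons] <;> linarith
  · rintro ⟨a, b, rfl⟩
    simp only [B, v, w₁, w₂, Pi.add_apply, Pi.smul_apply, smul_eq_mul,
      Matrix.cons_val_zero, Matrix.cons_val_one, Matrix.head_cons,
      Matrix.cons_val_two, Matrix.tail_cons]
    ring
end

section
/- In ℤ³ equipped with the symmetric bilinear form B(u,w) = u₁w₃ + u₃w₁ + 12u₂w₂, the orthogonal complement of the vector v = (−2,1,8) equals the ℤ-span of w₁ = (1,0,4) and w₂ = (1,−1,−2), and the Gram matrix of (w₁,w₂) is [[8,2],[2,8]]. (This computes the transcendental lattice of the singular K3 surface Y_{3√−5} of the Apéry–Fermi family: T(Y_{3√−5}) = [8 2 8].) -/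
theorem stmt_11 :
    let B : (Fin 3 → ℤ) → (Fin 3 → ℤ) → ℤ :=
      fun u w => u 0 * w 2 + u 2 * w 0 + 12 * (u 1 * w 1)
    let v : Fin 3 → ℤ := ![-2, 1, 8]
    let w₁ : Fin 3 → ℤ := ![1, 0, 4]
    let w₂ : Fin 3 → ℤ := ![1, -1, -2]
    {w : Fin 3 → ℤ | B v w = 0} = (Submodule.span ℤ {w₁, w₂} : Set (Fin 3 → ℤ)) ∧
      B w₁ w₁ = 8 ∧ B w₁ w₂ = 2 ∧ B w₂ w₁ = 2 ∧ B w₂ w₂ = 8 := by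
  intro B v w₁ w₂
  refine ⟨?_, by norm_num [B, w₁, w₂, Matrix.cons_val_two, Matrix.tail_cons, Matrix.head_cons], by norm_num [B, w₁, w₂, Matrix.cons_val_two, Matrix.tail_cons, Matrix.head_cons],
    by norm_num [B, w₁, w₂, Matrix.cons_val_two, Matrix.tail_cons, Matrix.head_cons], by norm_num [B, w₁, w₂, Matrix.cons_val_two, Matrix.tail_cons, Matrix.head_cons]⟩
  ext w
  simp only [Set.mem_setOf_eq, SetLike.mem_coe, Submodule.mem_span_pair]
  constructor
  · intro h
    simp only [B, v, Matrix.cons_val_zero, Matrix.cons_val_one, Matrix.head_cons,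
      Matrix.cons_val_two, Matrix.tail_cons] at h
    refine ⟨w 0 + w 1, -(w 1), ?_⟩
    funext i
    fin_cases i <;>
      simp [w₁, w₂, Matrix.cons_val_zero, Matrix.cons_val_one, Matrix.head_cons] <;> omega
  · rintro ⟨a, b, rfl⟩
    simp only [B, v, w₁, w₂, Pi.add_apply, Pi.smul_apply, smul_eq_mul,
      Matrix.cons_val_zero, Matrix.cons_val_one, Matrix.head_cons,
      Matrix.cons_val_two, Matrix.tail_cons]
    ring
end

section
/- Let F be a field of characteristic 0 and let k, t, X, Y ∈ F with X ≠ 0, Y ≠ 0 and k + 3 − t ≠ 0. If Y² + (t² − kt + 3)XY − (t+1)²(kt − (t−1)²)Y = X³, then setting x = (Y − X² + Yt)/(Y(k+3−t)), y = (Y + (t+1)X)/(X(k+3−t)) and z = t − x − y, one has Q_k(x,y,z) = 0, i.e. (x+y+z+1)(xy+xz+yz+xyz) − (k+4)xyz = 0. -/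
set_option maxHeartbeats 1000000

theorem stmt_13 (F : Type*) [Field F] [CharZero F] (k t X Y : F)
    (hX : X ≠ 0) (hY : Y ≠ 0) (hk : k + 3 - t ≠ 0)
    (hW : Y ^ 2 + (t ^ 2 - k * t + 3) * X * Y - (t + 1) ^ 2 * (k * t - (t - 1) ^ 2) * Y
      = X ^ 3) :
    let x := (Y - X ^ 2 + Y * t) / (Y * (k + 3 - t))
    let y := (Y + (t + 1) * X) / (X * (k + 3 - t))
    let z := t - x - y
    (x + y + z + 1) * (x * y + x * z + y * z + x * y * z) - (k + 4) * (x * y * z) = 0 := by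
  intro x y z
  have hx : x * (Y * (k + 3 - t)) = Y - X ^ 2 + Y * t :=
    div_mul_cancel₀ _ (mul_ne_zero hY hk)
  have hy : y * (X * (k + 3 - t)) = Y + (t + 1) * X :=
    div_mul_cancel₀ _ (mul_ne_zero hX hk)
  have hz : z = t - x - y := rfl
  clear_value x y z
  subst hz
  have hD : (X * Y * (k + 3 - t)) ^ 4 ≠ 0 :=
    pow_ne_zero _ (mul_ne_zero (mul_ne_zero hX hY) hk)
  have key : ((x + y + (t - x - y) + 1) * (x * y + x * (t - x - y) + y * (t - x - y)
      + x * y * (t - x - y)) - (k + 4) * (x * y * (t - x - y))) * (X * Y * (k + 3 - t)) ^ 4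
      = 0 := by
    linear_combination ((-1*X^4*Y^3*(k+3-t)^2) + (-1*X^4*Y^3*(k+3-t)^3*x) + (1*X^4*Y^3*(k+3-t)^4*y^2) + (1*X^4*Y^3*(k+3-t)^4*x*y) + (1*X^6*Y^2*(k+3-t)^2) + (-1*X^6*Y^2*(k+3-t)^3*y) + (-2*t*X^4*Y^3*(k+3-t)^2) + (1*t*X^4*Y^3*(k+3-t)^3) + (-1*t*X^4*Y^3*(k+3-t)^3*x) + (-1*t*X^4*Y^3*(k+3-t)^4*y) + (1*t*X^6*Y^2*(k+3-t)^2) + (-1*t^2*X^4*Y^3*(k+3-t)^2) + (1*t^2*X^4*Y^3*(k+3-t)^3)) * hx + ((-1*X^4*Y^4*(k+3-t)^2) + (-2*X^5*Y^3*(k+3-t)^2) + (-1*X^5*Y^3*(k+3-t)^3*y) + (1*X^7*Y^2*(k+3-t)^2) + (-2*t*X^5*Y^3*(k+3-t)^2) + (1*t*X^5*Y^3*(k+3-t)^3)) * hy + (-(X ^ 4 * Y ^ 3 * (k + 3 - t) ^ 2)) * hW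
  exact (mul_eq_zero.mp key).resolve_right hD
end

section
/- Let F be a field and let k, t, x, y ∈ F with (k+4)(t+k+3) ≠ 0. Suppose y² = x³ + ((k²−24)t² + 2(k−2)(k+4)²t + k(k+4)³)x² − 16t⁴(t+k+3)x. Then, setting m = x/(4(k+4)²(t+k+3)) and W = y/(4(t+k+3)(k+4)), one has W² = −4t⁴m + (k²−24)(k+4)²m²t² + (4m + 2(k−2))(k+4)⁴m²t + (4(k+3)m + k(k+4))(k+4)⁴m². (This change of variables exhibits the genus 1 fibration of Z_k, viewed over the base parameter m, whose Jacobian is the surface J_k.) -/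
set_option maxHeartbeats 1000000

theorem stmt_14 (F : Type*) [Field F] (k t x y : F)
    (h : (k + 4) * (t + k + 3) ≠ 0)
    (hW : y ^ 2 = x ^ 3 + ((k ^ 2 - 24) * t ^ 2 + 2 * (k - 2) * (k + 4) ^ 2 * t
      + k * (k + 4) ^ 3) * x ^ 2 - 16 * t ^ 4 * (t + k + 3) * x) :
    let m := x / (4 * (k + 4) ^ 2 * (t + k + 3))
    let W := y / (4 * (t + k + 3) * (k + 4))
    W ^ 2 = -4 * t ^ 4 * m + (k ^ 2 - 24) * (k + 4) ^ 2 * m ^ 2 * t ^ 2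
      + (4 * m + 2 * (k - 2)) * (k + 4) ^ 4 * m ^ 2 * t
      + (4 * (k + 3) * m + k * (k + 4)) * (k + 4) ^ 4 * m ^ 2 := by
  obtain ⟨hk, ht⟩ := mul_ne_zero_iff.mp h
  intro m W
  by_cases h4 : (4 : F) = 0
  · simp only [m, W, h4, zero_mul, mul_zero, div_zero]
    ring
  · have hd : (4 * (k + 4) ^ 2 * (t + k + 3)) ≠ 0 :=
      mul_ne_zero (mul_ne_zero h4 (pow_ne_zero 2 hk)) ht
    have he : (4 * (t + k + 3) * (k + 4)) ≠ 0 :=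
      mul_ne_zero (mul_ne_zero h4 ht) hk
    have hx : m * (4 * (k + 4) ^ 2 * (t + k + 3)) = x := div_mul_cancel₀ x hd
    have hy : W * (4 * (t + k + 3) * (k + 4)) = y := div_mul_cancel₀ y he
    rw [← hx, ← hy] at hW
    exact mul_left_cancel₀ (pow_ne_zero 2 he) (by linear_combination hW)
end

section
/- Let F = ℚ(i)(t) be the field of rational functions in t over the Gaussian field ℚ(i). The pair (x₀, y₀) = (16(t−3), 4i(t−3)(t²−24)) is an affine point of the elliptic curve over F with Weierstrass equation y² = x³ + (3t² − 16t + 12)x² − t⁴(t−3)x; that is, (4i(t−3)(t²−24))² = (16(t−3))³ + (3t²−16t+12)(16(t−3))² − t⁴(t−3)·16(t−3) holds in F. (This point generates the Mordell–Weil group of the rank 1 elliptic fibration (F₋₆) of the K3 surface Z₋₆.) -/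
open IntermediateField in
theorem stmt_16 :
    let K : IntermediateField ℚ ℂ := ℚ⟮Complex.I⟯
    let i : RatFunc K := RatFunc.C (IntermediateField.AdjoinSimple.gen ℚ Complex.I)
    let t : RatFunc K := RatFunc.X
    let x₀ : RatFunc K := 16 * (t - 3)
    let y₀ : RatFunc K := 4 * i * (t - 3) * (t ^ 2 - 24)
    y₀ ^ 2 = x₀ ^ 3 + (3 * t ^ 2 - 16 * t + 12) * x₀ ^ 2 - t ^ 4 * (t - 3) * x₀ := by
  intro K i t x₀ y₀
  have hgen : (IntermediateField.AdjoinSimple.gen ℚ Complex.I) ^ 2 = -1 := by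
    have : (algebraMap K ℂ) ((IntermediateField.AdjoinSimple.gen ℚ Complex.I) ^ 2) =
        (algebraMap K ℂ) (-1) := by
      push_cast
      simp [IntermediateField.AdjoinSimple.algebraMap_gen, Complex.I_sq]
    exact (algebraMap K ℂ).injective this
  have hi : i ^ 2 = -1 := by
    show (RatFunc.C (IntermediateField.AdjoinSimple.gen ℚ Complex.I)) ^ 2 = -1
    rw [← map_pow, hgen]
    rw [(RatFunc.C : K →+* RatFunc K).map_neg, (RatFunc.C : K →+* RatFunc K).map_one]
  show (4 * i * (t - 3) * (t ^ 2 - 24)) ^ 2 = _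
  linear_combination (16 * (t - 3) ^ 2 * (t ^ 2 - 24) ^ 2) * hi
end

section
/- Let F = ℚ(√−3)(t) be the field of rational functions in t over ℚ(√−3). The pair (x₀, y₀) with x₀ = −t⁴(t+72)²/(1728(t−24)²) and y₀ = √−3·t⁴(t+72)(t⁴ + 144t³ − 20736t² + 138240t + 995328)/(124416(t−24)³) is an affine point of the elliptic curve over F with Weierstrass equation y² = x³ + (30t² − 448t + 1536)x² − t⁴(t−9)x. (This point is of infinite order and generates the Mordell–Weil group of the rank 1 elliptic fibration (F₋₁₂) of the K3 surface Z₋₁₂.) -/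
set_option maxHeartbeats 2000000 in
set_option synthInstance.maxHeartbeats 200000 in
open IntermediateField in
theorem stmt_18 :
    let s : ℂ := Real.sqrt 3 * Complex.I
    let K : IntermediateField ℚ ℂ := ℚ⟮s⟯
    let sqrtm3 : RatFunc K := RatFunc.C (IntermediateField.AdjoinSimple.gen ℚ s)
    let t : RatFunc K := RatFunc.X
    let x₀ : RatFunc K := -(t ^ 4 * (t + 72) ^ 2) / (1728 * (t - 24) ^ 2)
    let y₀ : RatFunc K := sqrtm3 * t ^ 4 * (t + 72)
        * (t ^ 4 + 144 * t ^ 3 - 20736 * t ^ 2 + 138240 * t + 995328)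
        / (124416 * (t - 24) ^ 3)
    y₀ ^ 2 = x₀ ^ 3 + (30 * t ^ 2 - 448 * t + 1536) * x₀ ^ 2 - t ^ 4 * (t - 9) * x₀ := by
  intro s K sqrtm3 t x₀ y₀
  have hs : s ^ 2 = -3 := by
    have h3 : (Real.sqrt 3 : ℂ) ^ 2 = 3 := by
      rw [← Complex.ofReal_pow, Real.sq_sqrt (by norm_num)]
      norm_num
    simp only [s, mul_pow, h3, Complex.I_sq]
    ring
  have hgen : (IntermediateField.AdjoinSimple.gen ℚ s : K) ^ 2 = -3 := by
    have : ((IntermediateField.AdjoinSimple.gen ℚ s : K) ^ 2 : ℂ) = ((-3 : K) : ℂ) := by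
      push_cast
      rw [IntermediateField.AdjoinSimple.coe_gen, hs, ← IntermediateField.algebraMap_apply, map_ofNat]
    exact_mod_cast this
  have hsq : sqrtm3 ^ 2 = -3 := by
    rw [show sqrtm3 ^ 2 = RatFunc.C ((IntermediateField.AdjoinSimple.gen ℚ s : K) ^ 2) from
      (map_pow _ _ _).symm, hgen, RingHom.map_neg, map_ofNat]
  have ht : t - 24 ≠ 0 := by
    intro h
    have h24 : (24 : RatFunc K) = RatFunc.C (24 : K) := (map_ofNat RatFunc.C 24).symm
    have hX : (t : RatFunc K) = RatFunc.C (24 : K) := by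
      rw [← h24]; exact sub_eq_zero.mp h
    have := congrArg RatFunc.intDegree hX
    rw [RatFunc.intDegree_X, RatFunc.intDegree_C] at this
    norm_num at this
  have hQ : y₀ = sqrtm3 * ((t ^ 4 * (t + 72)
      * (t ^ 4 + 144 * t ^ 3 - 20736 * t ^ 2 + 138240 * t + 995328))
      / (124416 * (t - 24) ^ 3)) := by
    simp only [y₀]
    ring
  have habs : ∀ (A D a b : RatFunc K), D ≠ 0 →
      (A / D) ^ 3 + a * (A / D) ^ 2 - b * (A / D)
        = (A ^ 3 + a * A ^ 2 * D - b * A * D ^ 2) / D ^ 3 := by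
    intro A D a b hD
    field_simp
  have hC : ∀ n : ℕ, (OfNat.ofNat (n + 2) : RatFunc K) ≠ 0 := by
    intro n h
    have : RatFunc.C (OfNat.ofNat (n + 2) : K) = RatFunc.C 0 := by
      rw [map_ofNat, map_zero, h]
    have h2 := RingHom.injective (RatFunc.C : K →+* RatFunc K) this
    exact (NeZero.ne' (OfNat.ofNat (n + 2) : K)).symm h2
  have hD : (1728 : RatFunc K) * (t - 24) ^ 2 ≠ 0 :=
    mul_ne_zero (hC 1726) (pow_ne_zero _ ht)
  have hE : (124416 : RatFunc K) * (t - 24) ^ 3 ≠ 0 :=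
    mul_ne_zero (hC 124414) (pow_ne_zero _ ht)
  rw [hQ, mul_pow, hsq]
  simp only [x₀]
  rw [habs _ _ _ _ hD, div_pow, ← mul_div_assoc,
    div_eq_div_iff (pow_ne_zero _ hE) (pow_ne_zero _ hD)]
  ring
end

section
/- Let M be the integer matrix [[8,4],[4,8]], regarded as the Gram matrix of a symmetric bilinear form B(u,v) = uᵀMv on ℚ². Let L = ℤ² ⊂ ℚ² and let L* = {x ∈ ℚ² : B(x,e) ∈ ℤ for all e ∈ ℤ²} be the dual lattice. Then the quotient group L*/L is isomorphic to ℤ/4ℤ × ℤ/12ℤ; moreover there exist b, c ∈ L* whose classes generate the factors ℤ/4ℤ and ℤ/12ℤ respectively and satisfy B(b,b) ≡ 1/2 (mod 2ℤ), B(c,c) ≡ 7/6 (mod 2ℤ) and B(b,c) ≡ −1/4 (mod ℤ). (This is the discriminant form computation showing that the transcendental lattice of the singular K3 surface Z₋₆ is [8 4 8].) -/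
/-- The symmetric bilinear form on `ℚ²` with Gram matrix `[[8,4],[4,8]]`. -/
def B19 (u v : Fin 2 → ℚ) : ℚ :=
  8 * u 0 * v 0 + 4 * u 0 * v 1 + 4 * u 1 * v 0 + 8 * u 1 * v 1

/-- The lattice `L = ℤ² ⊂ ℚ²`. -/
def L19 : Submodule ℤ (Fin 2 → ℚ) where
  carrier := {x | ∀ i, ∃ n : ℤ, x i = (n : ℚ)}
  add_mem' := by
    intro x y hx hy i
    obtain ⟨a, ha⟩ := hx i
    obtain ⟨b, hb⟩ := hy i
    refine ⟨a + b, ?_⟩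
    have : (x + y) i = x i + y i := rfl
    rw [this, ha, hb]
    push_cast
    ring
  zero_mem' := by
    intro i
    exact ⟨0, by simp⟩
  smul_mem' := by
    intro c x hx i
    obtain ⟨a, ha⟩ := hx i
    refine ⟨c * a, ?_⟩
    have : (c • x) i = (c : ℚ) * x i := by
      simp [Pi.smul_apply, zsmul_eq_mul]
    rw [this, ha]
    push_cast
    ring

/-- The dual lattice `L* = {x ∈ ℚ² : B(x,e) ∈ ℤ for all e ∈ ℤ²}`. -/
def Lstar19 : Submodule ℤ (Fin 2 → ℚ) where
  carrier := {x | ∀ e : Fin 2 → ℤ, ∃ n : ℤ, B19 x (fun i => (e i : ℚ)) = (n : ℚ)}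
  add_mem' := by
    intro x y hx hy e
    obtain ⟨a, ha⟩ := hx e
    obtain ⟨b, hb⟩ := hy e
    refine ⟨a + b, ?_⟩
    have h : B19 (x + y) (fun i => (e i : ℚ))
        = B19 x (fun i => (e i : ℚ)) + B19 y (fun i => (e i : ℚ)) := by
      show B19 (x + y) _ = _
      unfold B19
      have hx0 : (x + y) 0 = x 0 + y 0 := rfl
      have hx1 : (x + y) 1 = x 1 + y 1 := rfl
      rw [hx0, hx1]
      ring
    rw [h, ha, hb]
    push_cast
    ring
  zero_mem' := by
    intro e
    refine ⟨0, ?_⟩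
    unfold B19
    norm_num
  smul_mem' := by
    intro c x hx e
    obtain ⟨a, ha⟩ := hx e
    refine ⟨c * a, ?_⟩
    have h : B19 (c • x) (fun i => (e i : ℚ)) = (c : ℚ) * B19 x (fun i => (e i : ℚ)) := by
      unfold B19
      have hx0 : (c • x) 0 = (c : ℚ) * x 0 := by simp [Pi.smul_apply, zsmul_eq_mul]
      have hx1 : (c • x) 1 = (c : ℚ) * x 1 := by simp [Pi.smul_apply, zsmul_eq_mul]
      rw [hx0, hx1]
      ring
    rw [h, ha]
    push_cast
    ring

private lemma dual_mn19 {x : Fin 2 → ℚ} (hx : x ∈ Lstar19) :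
    ∃ m n : ℤ, 8 * x 0 + 4 * x 1 = (m : ℚ) ∧ 4 * x 0 + 8 * x 1 = (n : ℚ) := by
  obtain ⟨m, hm⟩ := hx ![1, 0]
  obtain ⟨n, hn⟩ := hx ![0, 1]
  unfold B19 at hm hn
  simp at hm hn
  exact ⟨m, n, by linarith, by linarith⟩

private lemma u_int19 (x : Lstar19) :
    ∃ a : ℤ, 4 * x.1 0 + 20 * x.1 1 = (a : ℚ) := by
  obtain ⟨m, n, hm, hn⟩ := dual_mn19 x.2
  exact ⟨3 * n - m, by push_cast; linarith⟩

private lemma v_int19 (x : Lstar19) :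
    ∃ a : ℤ, (-12) * x.1 1 = (a : ℚ) := by
  obtain ⟨m, n, hm, hn⟩ := dual_mn19 x.2
  exact ⟨m - 2 * n, by push_cast; linarith⟩

private lemma num_add19 {p q : ℚ} (hp : ∃ a : ℤ, p = (a : ℚ)) (hq : ∃ b : ℤ, q = (b : ℚ)) :
    (p + q).num = p.num + q.num := by
  obtain ⟨a, rfl⟩ := hp
  obtain ⟨b, rfl⟩ := hq
  rw [← Int.cast_add]
  simp only [Rat.num_intCast]

noncomputable def f19 : Lstar19 →+ ZMod 4 × ZMod 12 where
  toFun x := ((((4 * x.1 0 + 20 * x.1 1 : ℚ).num : ℤ) : ZMod 4),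
              ((((-12) * x.1 1 : ℚ).num : ℤ) : ZMod 12))
  map_zero' := by
    simp
  map_add' x y := by
    have h1 : (4 * (x + y).1 0 + 20 * (x + y).1 1 : ℚ)
        = (4 * x.1 0 + 20 * x.1 1) + (4 * y.1 0 + 20 * y.1 1) := by
      have h0 : (x + y).1 0 = x.1 0 + y.1 0 := rfl
      have h1 : (x + y).1 1 = x.1 1 + y.1 1 := rfl
      rw [h0, h1]; ring
    have h2 : ((-12) * (x + y).1 1 : ℚ) = (-12) * x.1 1 + (-12) * y.1 1 := by
      have h1 : (x + y).1 1 = x.1 1 + y.1 1 := rfl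
      rw [h1]; ring
    have e1 := num_add19 (u_int19 x) (u_int19 y)
    have e2 := num_add19 (v_int19 x) (v_int19 y)
    simp only [h1, h2, e1, e2, Prod.mk_add_mk, Prod.mk.injEq]
    constructor <;> push_cast <;> ring

private lemma f19_apply (x : Lstar19) (a b : ℤ)
    (h1 : 4 * x.1 0 + 20 * x.1 1 = (a : ℚ)) (h2 : (-12) * x.1 1 = (b : ℚ)) :
    f19 x = (((a : ℤ) : ZMod 4), ((b : ℤ) : ZMod 12)) := by
  show ((((4 * x.1 0 + 20 * x.1 1 : ℚ).num : ℤ) : ZMod 4),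
        ((((-12) * x.1 1 : ℚ).num : ℤ) : ZMod 12)) = _
  rw [h1, h2, Rat.num_intCast, Rat.num_intCast]

private lemma f19_eq_zero_iff (x : Lstar19) : f19 x = 0 ↔ x.1 ∈ L19 := by
  obtain ⟨m, n, hm, hn⟩ := dual_mn19 x.2
  have hu : (4 * x.1 0 + 20 * x.1 1 : ℚ) = ((3 * n - m : ℤ) : ℚ) := by push_cast; linarith
  have hv : ((-12) * x.1 1 : ℚ) = ((m - 2 * n : ℤ) : ℚ) := by push_cast; linarith
  have hfx := f19_apply x _ _ hu hv
  constructor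
  · intro h
    rw [hfx, Prod.ext_iff] at h
    obtain ⟨h4, h12⟩ := h
    obtain ⟨l, hl⟩ := (ZMod.intCast_zmod_eq_zero_iff_dvd _ 4).mp h4
    obtain ⟨k, hk⟩ := (ZMod.intCast_zmod_eq_zero_iff_dvd _ 12).mp h12
    have hl' : (3 * n - m : ℚ) = 4 * l := by exact_mod_cast congrArg (Int.cast : ℤ → ℚ) hl
    have hk' : (m - 2 * n : ℚ) = 12 * k := by exact_mod_cast congrArg (Int.cast : ℤ → ℚ) hk
    intro i
    fin_cases i
    · exact ⟨l + 5 * k, by push_cast; linarith⟩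
    · exact ⟨-k, by push_cast; linarith⟩
  · intro h
    obtain ⟨a, ha⟩ := h 0
    obtain ⟨b, hb⟩ := h 1
    have hu' : (4 * x.1 0 + 20 * x.1 1 : ℚ) = ((4 * (a + 5 * b) : ℤ) : ℚ) := by
      rw [ha, hb]; push_cast; ring
    have hv' : ((-12) * x.1 1 : ℚ) = ((12 * (-b) : ℤ) : ℚ) := by
      rw [hb]; push_cast; ring
    rw [f19_apply x _ _ hu' hv', Prod.ext_iff]
    constructor
    · exact (ZMod.intCast_zmod_eq_zero_iff_dvd _ 4).mpr ⟨a + 5 * b, by push_cast; ring⟩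
    · exact (ZMod.intCast_zmod_eq_zero_iff_dvd _ 12).mpr ⟨-b, by push_cast; ring⟩

private lemma f19_surj : Function.Surjective f19 := by
  rintro ⟨s, t⟩
  obtain ⟨s', hs⟩ := ZMod.intCast_surjective s
  obtain ⟨t', ht⟩ := ZMod.intCast_surjective t
  refine ⟨⟨![(3 * s' + 5 * t') / 12, -t' / 12], ?_⟩, ?_⟩
  · intro e
    refine ⟨(2 * s' + 3 * t') * e 0 + (s' + t') * e 1, ?_⟩
    unfold B19
    simp
    ring
  · rw [f19_apply _ s' t' ?_ ?_, hs, ht]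
    · show 4 * ((3 * (s':ℚ) + 5 * t') / 12) + 20 * (-(t':ℚ) / 12) = (s' : ℚ)
      ring
    · show (-12) * (-(t':ℚ) / 12) = (t' : ℚ)
      ring

private noncomputable def psi19 :
    (Lstar19 ⧸ (Submodule.comap Lstar19.subtype L19)) →ₗ[ℤ] ZMod 4 × ZMod 12 :=
  Submodule.liftQ _ f19.toIntLinearMap (by
    intro x hx
    have hx' : x.1 ∈ L19 := hx
    have : f19 x = 0 := (f19_eq_zero_iff x).mpr hx'
    exact LinearMap.mem_ker.mpr this)

private lemma psi19_bij : Function.Bijective psi19 := by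
  constructor
  · rw [← LinearMap.ker_eq_bot, psi19, Submodule.ker_liftQ_eq_bot]
    intro x hx
    have : f19 x = 0 := LinearMap.mem_ker.mp hx
    exact (f19_eq_zero_iff x).mp this
  · intro z
    obtain ⟨x, hx⟩ := f19_surj z
    exact ⟨Submodule.Quotient.mk x, by rw [psi19, Submodule.liftQ_apply]; exact hx⟩

private def b19 : Lstar19 :=
  ⟨![1/4, 0], by
    intro e
    refine ⟨2 * e 0 + e 1, ?_⟩
    simp only [B19, Matrix.cons_val_zero, Matrix.cons_val_one, Matrix.head_cons]
    push_cast
    ring⟩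

private def c19 : Lstar19 :=
  ⟨![5/12, -1/12], by
    intro e
    refine ⟨3 * e 0 + e 1, ?_⟩
    simp only [B19, Matrix.cons_val_zero, Matrix.cons_val_one, Matrix.head_cons]
    push_cast
    ring⟩

/-- The discriminant group `L*/L` of the lattice with Gram matrix `[[8,4],[4,8]]` is
`ℤ/4ℤ × ℤ/12ℤ`, with generators `b`, `c` of the two factors satisfying
`B(b,b) ≡ 1/2 (mod 2ℤ)`, `B(c,c) ≡ 7/6 (mod 2ℤ)` and `B(b,c) ≡ -1/4 (mod ℤ)`. -/
theorem stmt_19 :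
    ∃ (φ : (Lstar19 ⧸ (Submodule.comap Lstar19.subtype L19)) ≃+ (ZMod 4 × ZMod 12))
      (b c : Lstar19),
      φ (Submodule.Quotient.mk b) = (1, 0) ∧
      φ (Submodule.Quotient.mk c) = (0, 1) ∧
      (∃ n : ℤ, B19 (b : Fin 2 → ℚ) (b : Fin 2 → ℚ) - 1 / 2 = 2 * (n : ℚ)) ∧
      (∃ n : ℤ, B19 (c : Fin 2 → ℚ) (c : Fin 2 → ℚ) - 7 / 6 = 2 * (n : ℚ)) ∧
      (∃ n : ℤ, B19 (b : Fin 2 → ℚ) (c : Fin 2 → ℚ) + 1 / 4 = (n : ℚ)) := by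
  refine ⟨(LinearEquiv.ofBijective psi19 psi19_bij).toAddEquiv, b19, c19, ?_, ?_, ?_, ?_, ?_⟩
  · show psi19 (Submodule.Quotient.mk b19) = (1, 0)
    rw [psi19, Submodule.liftQ_apply]
    have h := f19_apply b19 1 0
      (by show 4 * (1/4 : ℚ) + 20 * 0 = ((1:ℤ):ℚ); norm_num)
      (by show (-12 : ℚ) * 0 = ((0:ℤ):ℚ); norm_num)
    simpa using h
  · show psi19 (Submodule.Quotient.mk c19) = (0, 1)
    rw [psi19, Submodule.liftQ_apply]
    have h := f19_apply c19 0 1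
      (by show 4 * (5/12 : ℚ) + 20 * (-1/12 : ℚ) = ((0:ℤ):ℚ); norm_num)
      (by show (-12 : ℚ) * (-1/12 : ℚ) = ((1:ℤ):ℚ); norm_num)
    simpa using h
  · exact ⟨0, by norm_num [B19, b19, Matrix.cons_val_zero, Matrix.cons_val_one, Matrix.head_cons]⟩
  · exact ⟨0, by norm_num [B19, c19, Matrix.cons_val_zero, Matrix.cons_val_one, Matrix.head_cons]⟩
  · exact ⟨1, by norm_num [B19, b19, c19, Matrix.cons_val_zero, Matrix.cons_val_one, Matrix.head_cons]⟩
end
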